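/- Let n be a positive integer and let A and B be n×n circulant matrices over F_2 satisfying A·Aᵀ + B·Bᵀ = I_n. Then the [4n,2n] binary code whose generator matrix is (I_{2n} | M), where M is the 2n×2n block matrix with blocks A, B in the top row and Bᵀ, Aᵀ in the bottom row (i.e., the code is the row space of this matrix over F_2), is self-dual. -/

import Mathlib

open scoped BigOperators
open Matrix

/-- The (Hamming) weight of a binary vector: the number of nonzero coordinates. -/
def wt {m : ℕ} (x : Fin m → ZMod 2) : ℕ :=
  (Finset.univ.filter fun i => x i ≠ 0).card

/-- The dual code of a binary code `C` of length `m`, with respect to the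
standard inner product. -/
def dualCode {m : ℕ} (C : Submodule (ZMod 2) (Fin m → ZMod 2)) :
    Submodule (ZMod 2) (Fin m → ZMod 2) where
  carrier := {x | ∀ y ∈ C, ∑ i, x i * y i = 0}
  add_mem' := by
    intro a b ha hb y hy
    simp only [Set.mem_setOf_eq] at *
    simp only [Pi.add_apply, add_mul, Finset.sum_add_distrib, ha y hy, hb y hy, add_zero]
  zero_mem' := by
    intro y hy
    simp
  smul_mem' := by
    intro c a ha y hy
    simp only [Set.mem_setOf_eq] at *
    simp only [Pi.smul_apply, smul_eq_mul, mul_assoc, ← Finset.mul_sum, ha y hy, mul_zero]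

/-- A binary code is self-dual if it equals its dual code. -/
def IsSelfDual {m : ℕ} (C : Submodule (ZMod 2) (Fin m → ZMod 2)) : Prop :=
  C = dualCode C

/-- A code is singly even if it contains a codeword of weight ≡ 2 (mod 4). -/
def SinglyEven {m : ℕ} (C : Submodule (ZMod 2) (Fin m → ZMod 2)) : Prop :=
  ∃ x ∈ C, wt x % 4 = 2

/-- A code is doubly even if every codeword has weight divisible by 4. -/
def DoublyEven {m : ℕ} (C : Submodule (ZMod 2) (Fin m → ZMod 2)) : Prop :=
  ∀ x ∈ C, wt x % 4 = 0

/-- `HasMinWeight C d` : the minimum weight of a nonzero codeword of `C` is `d`. -/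
def HasMinWeight {m : ℕ} (C : Submodule (ZMod 2) (Fin m → ZMod 2)) (d : ℕ) : Prop :=
  (∃ x ∈ C, x ≠ 0 ∧ wt x = d) ∧ ∀ x ∈ C, x ≠ 0 → d ≤ wt x

/-- `Awt C w` : the number of codewords of `C` of weight `w`. -/
noncomputable def Awt {m : ℕ} (C : Submodule (ZMod 2) (Fin m → ZMod 2)) (w : ℕ) : ℕ :=
  Set.ncard {x : Fin m → ZMod 2 | x ∈ C ∧ wt x = w}

/-- Two codes of length `m` are equivalent if some permutation of the `m`
coordinates maps one onto the other. -/
def CodeEquiv {m : ℕ} (C D : Submodule (ZMod 2) (Fin m → ZMod 2)) : Prop :=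
  ∃ σ : Equiv.Perm (Fin m), ∀ x : Fin m → ZMod 2, x ∈ C ↔ (fun i => x (σ i)) ∈ D

/-- `HasCoveringRadius C r` : the covering radius of `C` is exactly `r`, i.e. every
vector is within Hamming distance `r` of a codeword, and some vector has distance
at least `r` from every codeword. -/
def HasCoveringRadius {m : ℕ} (C : Submodule (ZMod 2) (Fin m → ZMod 2)) (r : ℕ) : Prop :=
  (∀ v : Fin m → ZMod 2, ∃ c ∈ C, wt (v - c) ≤ r) ∧
  (∃ v : Fin m → ZMod 2, ∀ c ∈ C, r ≤ wt (v - c))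

/-- A matrix is circulant if each row is the cyclic shift of the previous one. -/
def IsCirculant {n : ℕ} (A : Matrix (Fin n) (Fin n) (ZMod 2)) : Prop :=
  ∃ v : Fin n → ZMod 2, A = Matrix.circulant v

/-- Entry of a matrix extended by zero to all of ℕ × ℕ. -/
def matEntry {n : ℕ} (A : Matrix (Fin n) (Fin n) (ZMod 2)) (a b : ℕ) : ZMod 2 :=
  if h : a < n ∧ b < n then A ⟨a, h.1⟩ ⟨b, h.2⟩ else 0

/-- The `(a, b)` entry (for `a < 2n`, `b < 4n`) of the generator matrix
`(I_{2n} | M)`, where `M` is the block matrix with blocks `A`, `B` in the top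
row and `Bᵀ`, `Aᵀ` in the bottom row. -/
def fourCircEntry {n : ℕ} (A B : Matrix (Fin n) (Fin n) (ZMod 2)) (a b : ℕ) : ZMod 2 :=
  if b < 2 * n then (if a = b then 1 else 0)
  else
    if a < n then
      (if b - 2 * n < n then matEntry A a (b - 2 * n) else matEntry B a (b - 2 * n - n))
    else
      (if b - 2 * n < n then matEntry B (b - 2 * n) (a - n)
       else matEntry A (b - 2 * n - n) (a - n))

/-- The four-circulant code of length `4n` determined by circulant matrices `A`
and `B`: the row space of the generator matrix `(I_{2n} | M)`, where `M` is the
block matrix with blocks `A`, `B` in the top row and `Bᵀ`, `Aᵀ` in the bottom row. -/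
def fourCircCode (n : ℕ) (A B : Matrix (Fin n) (Fin n) (ZMod 2)) :
    Submodule (ZMod 2) (Fin (4 * n) → ZMod 2) :=
  Submodule.span (ZMod 2)
    (Set.range fun i : Fin (2 * n) => fun j : Fin (4 * n) => fourCircEntry A B (i : ℕ) (j : ℕ))

/-- A code of length `m` is four-circulant if `m = 4n` and it is the row space of
a matrix `(I_{2n} | M)`, where `M` is the block matrix with blocks `A`, `B` in the
top row and `Bᵀ`, `Aᵀ` in the bottom row, for some `n × n` circulant matrices `A`, `B`. -/
def IsFourCirculant {m : ℕ} (C : Submodule (ZMod 2) (Fin m → ZMod 2)) : Prop :=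
  ∃ n : ℕ, m = 4 * n ∧
    ∃ A B : Matrix (Fin n) (Fin n) (ZMod 2), IsCirculant A ∧ IsCirculant B ∧
      C = Submodule.span (ZMod 2)
        (Set.range fun i : Fin (2 * n) => fun j : Fin m => fourCircEntry A B (i : ℕ) (j : ℕ))



section FourCircAux

/-- Equivalence `Fin n ⊕ Fin n ≃ Fin (2 * n)`. -/
def fcEqv2 (n : ℕ) : Fin n ⊕ Fin n ≃ Fin (2 * n) :=
  finSumFinEquiv.trans (finCongr (two_mul n).symm)

/-- Equivalence `Fin (2*n) ⊕ Fin (2*n) ≃ Fin (4 * n)`. -/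
def fcEqv4 (n : ℕ) : Fin (2 * n) ⊕ Fin (2 * n) ≃ Fin (4 * n) :=
  finSumFinEquiv.trans (finCongr (by ring))

lemma fcEqv2_inl {n : ℕ} (a : Fin n) : ((fcEqv2 n (Sum.inl a)) : ℕ) = (a : ℕ) := rfl
lemma fcEqv2_inr {n : ℕ} (a : Fin n) : ((fcEqv2 n (Sum.inr a)) : ℕ) = n + (a : ℕ) := rfl
lemma fcEqv4_inl {n : ℕ} (a : Fin (2 * n)) : ((fcEqv4 n (Sum.inl a)) : ℕ) = (a : ℕ) := rfl
lemma fcEqv4_inr {n : ℕ} (a : Fin (2 * n)) :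
    ((fcEqv4 n (Sum.inr a)) : ℕ) = 2 * n + (a : ℕ) := rfl

/-- The right-hand block `M` of the generator matrix. -/
def fcM {n : ℕ} (A B : Matrix (Fin n) (Fin n) (ZMod 2)) :
    Matrix (Fin (2 * n)) (Fin (2 * n)) (ZMod 2) :=
  fun i j => fourCircEntry A B (i : ℕ) (2 * n + (j : ℕ))

lemma fcM_block {n : ℕ} (A B : Matrix (Fin n) (Fin n) (ZMod 2)) (p q : Fin n ⊕ Fin n) :
    fcM A B (fcEqv2 n p) (fcEqv2 n q) = Matrix.fromBlocks A B Bᵀ Aᵀ p q := by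
  rcases p with a | a <;> rcases q with b | b <;>
    · have ha := a.isLt
      have hb := b.isLt
      dsimp only [fcM, fcEqv2_inl, fcEqv2_inr]
      simp only [fcM, fcEqv2_inl, fcEqv2_inr, fourCircEntry, matEntry,
        Matrix.fromBlocks_apply₁₁, Matrix.fromBlocks_apply₁₂, Matrix.fromBlocks_apply₂₁,
        Matrix.fromBlocks_apply₂₂, Matrix.transpose_apply]
      split_ifs <;>
        first
          | omega
          | (congr 1 <;> (apply Fin.ext; simp only [Fin.val_mk]; omega))

lemma fcM_eq {n : ℕ} (A B : Matrix (Fin n) (Fin n) (ZMod 2)) :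
    fcM A B = (Matrix.fromBlocks A B Bᵀ Aᵀ).submatrix (fcEqv2 n).symm (fcEqv2 n).symm := by
  ext i j
  obtain ⟨p, rfl⟩ := (fcEqv2 n).surjective i
  obtain ⟨q, rfl⟩ := (fcEqv2 n).surjective j
  simp [fcM_block]

lemma fcM_mul_transpose {n : ℕ} (A B : Matrix (Fin n) (Fin n) (ZMod 2))
    (hA : IsCirculant A) (hB : IsCirculant B) (hAB : A * Aᵀ + B * Bᵀ = 1) :
    fcM A B * (fcM A B)ᵀ = 1 := by
  have hself : ∀ X : Matrix (Fin n) (Fin n) (ZMod 2), X + X = 0 := by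
    intro X; ext i j; simp [CharTwo.add_self_eq_zero]
  obtain ⟨v, hv⟩ := hA
  obtain ⟨w, hw⟩ := hB
  have hAt : Aᵀ = Matrix.circulant fun i => v (-i) := by
    rw [hv]; exact Matrix.Fin.transpose_circulant v
  have hBt : Bᵀ = Matrix.circulant fun i => w (-i) := by
    rw [hw]; exact Matrix.Fin.transpose_circulant w
  have h2 : A * B + B * A = 0 := by
    rw [hv, hw, Matrix.Fin.circulant_mul_comm, ← hv, ← hw]; exact hself _
  have h3 : Bᵀ * Aᵀ + Aᵀ * Bᵀ = 0 := by
    rw [hAt, hBt, Matrix.Fin.circulant_mul_comm, ← hAt, ← hBt]; exact hself _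
  have hAA : Aᵀ * A = A * Aᵀ := by
    rw [hAt]; nth_rewrite 1 [hv]
    rw [Matrix.Fin.circulant_mul_comm, ← hAt, ← hv]
  have hBB : Bᵀ * B = B * Bᵀ := by
    rw [hBt]; nth_rewrite 1 [hw]
    rw [Matrix.Fin.circulant_mul_comm, ← hBt, ← hw]
  have h4 : Bᵀ * B + Aᵀ * A = 1 := by
    rw [hAA, hBB, add_comm, hAB]
  rw [fcM_eq, Matrix.transpose_submatrix, Matrix.fromBlocks_transpose,
    Matrix.transpose_transpose, Matrix.transpose_transpose,
    Matrix.submatrix_mul_equiv, Matrix.fromBlocks_multiply, hAB, h2, h3, h4]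
  rw [Matrix.fromBlocks_one, Matrix.submatrix_one_equiv]

end FourCircAux

/-- If `A` and `B` are `n × n` circulant matrices over `F_2` with
`A * Aᵀ + B * Bᵀ = I_n`, then the `[4n, 2n]` code with generator matrix
`(I_{2n} | M)`, where `M` has blocks `A`, `B` / `Bᵀ`, `Aᵀ`, is self-dual. -/
theorem four_circulant_self_dual (n : ℕ) (hn : 0 < n)
    (A B : Matrix (Fin n) (Fin n) (ZMod 2))
    (hA : IsCirculant A) (hB : IsCirculant B)
    (hAB : A * Aᵀ + B * Bᵀ = 1) :
    IsSelfDual (fourCircCode n A B) ∧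
      Module.finrank (ZMod 2) (fourCircCode n A B) = 2 * n := by
  haveI : NeZero n := ⟨hn.ne'⟩
  classical
  set g : Fin (2 * n) → (Fin (4 * n) → ZMod 2) :=
    fun i => fun j : Fin (4 * n) => fourCircEntry A B (i : ℕ) (j : ℕ) with hg
  have hC : fourCircCode n A B = Submodule.span (ZMod 2) (Set.range g) := rfl
  -- values of the generators on the two halves
  have hginl : ∀ (i j : Fin (2 * n)), g i (fcEqv4 n (Sum.inl j)) = if i = j then 1 else 0 := by
    intro i j
    simp only [hg, fcEqv4_inl, fourCircEntry, if_pos j.isLt]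
    simp [Fin.val_inj]
  have hginr : ∀ (i j : Fin (2 * n)), g i (fcEqv4 n (Sum.inr j)) = fcM A B i j := by
    intro i j
    simp only [hg, fcEqv4_inr, fcM]
  have hMM : fcM A B * (fcM A B)ᵀ = 1 := fcM_mul_transpose A B hA hB hAB
  -- pairwise orthogonality of generators
  have hpair : ∀ i i' : Fin (2 * n), ∑ j, g i j * g i' j = 0 := by
    intro i i'
    have hs : ∑ j, g i j * g i' j
        = ∑ p : Fin (2 * n) ⊕ Fin (2 * n), g i (fcEqv4 n p) * g i' (fcEqv4 n p) :=
      (Fintype.sum_equiv (fcEqv4 n) _ _ fun p => rfl).symm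
    rw [hs, Fintype.sum_sum_type]
    have e1 : ∑ j : Fin (2 * n), g i (fcEqv4 n (Sum.inl j)) * g i' (fcEqv4 n (Sum.inl j))
        = if i = i' then 1 else 0 := by
      simp only [hginl, ite_mul, one_mul, zero_mul]
      rw [Finset.sum_ite_eq Finset.univ i (fun j => if i' = j then (1 : ZMod 2) else 0)]
      simp [eq_comm]
    have e2 : ∑ j : Fin (2 * n), g i (fcEqv4 n (Sum.inr j)) * g i' (fcEqv4 n (Sum.inr j))
        = if i = i' then 1 else 0 := by
      simp only [hginr]
      have : ∑ j, fcM A B i j * fcM A B i' j = (fcM A B * (fcM A B)ᵀ) i i' := by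
        simp [Matrix.mul_apply, Matrix.transpose_apply]
      rw [this, hMM, Matrix.one_apply]
    rw [e1, e2]
    split_ifs <;> decide
  -- C ⊆ dual C
  have hle : fourCircCode n A B ≤ dualCode (fourCircCode n A B) := by
    rw [hC]
    rw [Submodule.span_le]
    rintro _ ⟨i, rfl⟩
    intro y hy
    induction hy using Submodule.span_induction with
    | mem z hz =>
        obtain ⟨i', rfl⟩ := hz
        exact hpair i i'
    | zero => simp
    | add y z hy hz ihy ihz =>
        simp only [Pi.add_apply, mul_add, Finset.sum_add_distrib, ihy, ihz, add_zero]
    | smul c y hy ihy =>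
        have hcy : ∑ x, g i x * (c • y) x = c * ∑ x, g i x * y x := by
          rw [Finset.mul_sum]
          refine Finset.sum_congr rfl fun x _ => ?_
          simp only [Pi.smul_apply, smul_eq_mul]
          ring
        rw [hcy, ihy, mul_zero]
  -- linear independence of the generators
  have hli : LinearIndependent (ZMod 2) g := by
    rw [Fintype.linearIndependent_iff]
    intro c hc i
    have := congrFun hc (fcEqv4 n (Sum.inl i))
    simp only [Finset.sum_apply, Pi.smul_apply, smul_eq_mul, Pi.zero_apply, hginl, mul_ite, mul_one, mul_zero] at this
    rwa [Finset.sum_ite_eq' Finset.univ i c, if_pos (Finset.mem_univ i)] at this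
  constructor
  · -- self-duality
    apply le_antisymm hle
    intro x hx
    -- coefficients from the left half
    set c : Fin (2 * n) → ZMod 2 := fun i => x (fcEqv4 n (Sum.inl i)) with hcdef
    set y : Fin (4 * n) → ZMod 2 := ∑ i, c i • g i with hydef
    have hyC : y ∈ fourCircCode n A B := by
      rw [hC]
      exact Submodule.sum_mem _ fun i _ =>
        Submodule.smul_mem _ _ (Submodule.subset_span ⟨i, rfl⟩)
    have hyl : ∀ j : Fin (2 * n), y (fcEqv4 n (Sum.inl j)) = c j := by
      intro j
      simp only [hydef, Finset.sum_apply, Pi.smul_apply, smul_eq_mul, hginl, mul_ite, mul_one, mul_zero]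
      rw [Finset.sum_ite_eq' Finset.univ j c, if_pos (Finset.mem_univ j)]
    -- the difference z
    set z : Fin (4 * n) → ZMod 2 := x - y with hzdef
    have hz1 : ∀ j : Fin (2 * n), z (fcEqv4 n (Sum.inl j)) = 0 := by
      intro j
      simp [hzdef, hyl j, hcdef]
    have hzg : ∀ i : Fin (2 * n), ∑ j, z j * g i j = 0 := by
      intro i
      have hgiC : g i ∈ fourCircCode n A B := by
        rw [hC]; exact Submodule.subset_span ⟨i, rfl⟩
      have h1 : ∑ j, x j * g i j = 0 := hx (g i) hgiC
      have h2 : ∑ j, y j * g i j = 0 := hle hyC (g i) hgiC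
      simp only [hzdef, Pi.sub_apply, sub_mul, Finset.sum_sub_distrib, h1, h2, sub_zero]
    -- the right half of z
    set z' : Fin (2 * n) → ZMod 2 := fun j => z (fcEqv4 n (Sum.inr j)) with hz'def
    have hmv : (fcM A B).mulVec z' = 0 := by
      funext i
      have hs : ∑ j, z j * g i j
          = ∑ p : Fin (2 * n) ⊕ Fin (2 * n), z (fcEqv4 n p) * g i (fcEqv4 n p) :=
        (Fintype.sum_equiv (fcEqv4 n) _ _ fun p => rfl).symm
      have := hzg i
      rw [hs, Fintype.sum_sum_type] at this
      simp only [hz1, zero_mul, Finset.sum_const_zero, zero_add, hginr] at this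
      have hcom : ∑ j : Fin (2 * n), z (fcEqv4 n (Sum.inr j)) * fcM A B i j
          = (fcM A B).mulVec z' i := by
        simp only [Matrix.mulVec, dotProduct, hz'def]
        congr 1; ext j; ring
      rw [hcom] at this
      simpa using this
    have hz' : z' = 0 := by
      have hMM' : (fcM A B)ᵀ * fcM A B = 1 := mul_eq_one_comm.mp hMM
      calc z' = Matrix.mulVec 1 z' := by simp
        _ = ((fcM A B)ᵀ * fcM A B).mulVec z' := by rw [hMM']
        _ = (fcM A B)ᵀ.mulVec ((fcM A B).mulVec z') := by rw [Matrix.mulVec_mulVec]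
        _ = 0 := by rw [hmv]; simp
    have hz0 : z = 0 := by
      funext j
      obtain ⟨p, rfl⟩ := (fcEqv4 n).surjective j
      rcases p with j | j
      · exact hz1 j
      · exact congrFun hz' j
    have : x = y := by
      have := sub_eq_zero.mp (hzdef ▸ hz0 : x - y = 0)
      exact this
    rw [this]
    exact hyC
  · -- rank
    rw [hC, finrank_span_eq_card hli, Fintype.card_fin]
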